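/- arXiv:2605.15670 — 12 statements merged into one kernel-verified Lean document; each statement's English description precedes it below -/
import Mathlib

section
/- Let P : R → R be a Rota–Baxter operator of weight zero on the truncated polynomial algebra R = K ⊕ V. Then the image of P is contained in V; in particular P(1) ∈ V and P(V) ⊆ V. -/
open TrivSqZeroExt

/-- if `P` is a Rota–Baxter operator of weight zero on the truncated
polynomial algebra `R = K ⊕ V` (the trivial square-zero extension of `K` by `V = Kⁿ`),
then the image of `P` is contained in `V`; in particular `P 1 ∈ V` and `P(V) ⊆ V`. -/
theorem weight_zero_image_in_V {K : Type*} [Field K] [CharZero K] {n : ℕ} (hn : 1 ≤ n)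
    (P : TrivSqZeroExt K (Fin n → K) →ₗ[K] TrivSqZeroExt K (Fin n → K))
    (hP : ∀ x y, P x * P y = P (x * P y + P x * y)) :
    (∀ x, (P x).fst = 0) ∧ (P 1).fst = 0 ∧ ∀ u : Fin n → K, (P (inr u)).fst = 0 := by
  have hdec : ∀ z : TrivSqZeroExt K (Fin n → K), z = z.fst • 1 + inr z.snd := by
    intro z; ext <;> simp
  have hA : ∀ v : Fin n → K, (P (inr v)).fst = 0 := by
    intro v
    set t := (P (inr v)).fst with ht
    have harg : (inr v : TrivSqZeroExt K (Fin n → K)) * P (inr v) + P (inr v) * inr v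
        = (2 * t) • inr v := by
      ext
      · simp
      · simp [two_smul, mul_smul, op_smul_eq_smul, ← ht, add_smul]
    have h := congrArg TrivSqZeroExt.fst (hP (inr v) (inr v))
    rw [harg, map_smul] at h
    simp [← ht] at h
    rcases h with h | h
    · linear_combination -h
    · exact h
  have hB : (P 1).fst = 0 := by
    set c := (P 1).fst with hc
    have h := congrArg TrivSqZeroExt.fst (hP 1 1)
    rw [one_mul, mul_one] at h
    have hPP : (P (P 1)).fst = c * c := by
      conv_lhs => rw [show P 1 = c • 1 + inr (P 1).snd from hdec (P 1)]
      rw [map_add, map_smul]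
      simp [← hc, hA]
    rw [map_add] at h
    simp [hPP, ← hc] at h
    exact h
  have hAll : ∀ x, (P x).fst = 0 := by
    intro x
    conv_lhs => rw [show x = x.fst • 1 + inr x.snd from hdec x]
    rw [map_add, map_smul]
    simp [hB, hA]
  exact ⟨hAll, hB, fun u => hA u⟩
end

section
/- Let P : R → R be a Rota–Baxter operator of weight zero on the truncated polynomial algebra R = K ⊕ V. Then P(P(1)) = 0. -/
open TrivSqZeroExt

/-- if `P` is a Rota–Baxter operator of weight zero on the truncated
polynomial algebra `R = K ⊕ V`, then `P (P 1) = 0`. -/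
theorem weight_zero_P_P_one {K : Type*} [Field K] [CharZero K] {n : ℕ} (hn : 1 ≤ n)
    (P : TrivSqZeroExt K (Fin n → K) →ₗ[K] TrivSqZeroExt K (Fin n → K))
    (hP : ∀ x y, P x * P y = P (x * P y + P x * y)) :
    P (P 1) = 0 := by
  set e := P 1 with he
  set a := fst e with ha
  set f := P e with hf
  have hsm : ∀ (k : K) (x : TrivSqZeroExt K (Fin n → K)),
      k • x = algebraMap K (TrivSqZeroExt K (Fin n → K)) k * x := fun k x => by
    ext <;> simp [TrivSqZeroExt.algebraMap_eq_inl]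
  have he2 : e * e = (2 * a) • e - (a ^ 2) • 1 := by
    ext
    · simp; ring
    · simp [smul_smul, two_mul, op_smul_eq_smul]; ring
  have h1 : (2 : K) • f = e * e := by
    have := hP 1 1
    rw [one_mul, mul_one, map_add] at this
    rw [two_smul]; exact this.symm
  set c : TrivSqZeroExt K (Fin n → K) := algebraMap K _ a with hc
  have he2' : e * e = 2 * c * e - c ^ 2 := by
    rw [he2, hsm, hsm, mul_one, map_mul, map_pow, map_ofNat]
  have h1' : 2 * f = e * e := by
    rw [← h1, hsm, map_ofNat]
  have hef : e * f + f * e = (3 * a ^ 2) • e - (2 * a ^ 3) • (1 : _) := by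
    rw [hsm, hsm, mul_one, map_mul, map_mul, map_pow, map_pow, map_ofNat, map_ofNat]
    have hcm : f * e = e * f := mul_comm _ _
    linear_combination e * h1' + (e + 2 * c) * he2' + hcm
  have hE3 : f * f = (3 * a ^ 2) • f - (2 * a ^ 3) • e := by
    rw [hP e e, hef, map_sub, map_smul, map_smul, ← he, ← hf]
  set φ := fst f with hφ
  have h1K : (2 : K) * φ = a ^ 2 := by
    have := congrArg fst h1
    simpa [smul_eq_mul, sq] using this
  have hE3K : φ * φ = 3 * a ^ 2 * φ - 2 * a ^ 4 := by
    have := congrArg fst hE3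
    simp [smul_eq_mul] at this
    rw [this]; ring
  have ha4 : (3 : K) * a ^ 4 = 0 := by
    linear_combination (5 * a ^ 2 - 2 * φ) * h1K + 4 * hE3K
  have ha0 : a = 0 := by
    have : a ^ 4 = 0 := by
      rcases mul_eq_zero.mp ha4 with h | h
      · exact absurd h (by norm_num)
      · exact h
    exact pow_eq_zero_iff (by norm_num) |>.mp this
  have hf0 : (2 : K) • f = 0 := by
    rw [h1, he2, ha0]; simp
  have := smul_eq_zero.mp hf0
  rcases this with h | h
  · exact absurd h two_ne_zero
  · exact h
end

section
/- Let P : R → R be a Rota–Baxter operator of weight zero on the truncated polynomial algebra R = K ⊕ V. Then P² = 0, i.e. P(P(x)) = 0 for all x ∈ R. -/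
open TrivSqZeroExt

/-- if `P` is a Rota–Baxter operator of weight zero on the truncated
polynomial algebra `R = K ⊕ V`, then `P² = 0`. -/
theorem weight_zero_P_sq_zero {K : Type*} [Field K] [CharZero K] {n : ℕ} (hn : 1 ≤ n)
    (P : TrivSqZeroExt K (Fin n → K) →ₗ[K] TrivSqZeroExt K (Fin n → K))
    (hP : ∀ x y, P x * P y = P (x * P y + P x * y)) :
    ∀ x, P (P x) = 0 := by
  have hinr : ∀ x : TrivSqZeroExt K (Fin n → K), fst x = 0 → x = inr (snd x) := by
    intro x hx
    conv_lhs => rw [← inl_fst_add_inr_snd_eq x]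
    rw [hx]
    simp
  have hinl : ∀ r : K, (inl r : TrivSqZeroExt K (Fin n → K)) = r • 1 := by
    intro r; ext <;> simp
  -- fst of P on inr is zero
  have hφ : ∀ v : Fin n → K, fst (P (inr v)) = 0 := by
    have key : ∀ v w : Fin n → K, fst (P (inr v)) * fst (P (inr w)) = 0 := by
      intro v w
      have h := congrArg fst (hP (inr v) (inr w))
      have e1 : (inr v : TrivSqZeroExt K (Fin n → K)) * P (inr w)
          = inr (fst (P (inr w)) • v) := by
        conv_lhs => rw [← inl_fst_add_inr_snd_eq (P (inr w))]
        rw [mul_add, inr_mul_inr]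
        simp [inr_mul_inl]
      have e2 : P (inr v) * (inr w : TrivSqZeroExt K (Fin n → K))
          = inr (fst (P (inr v)) • w) := by
        conv_lhs => rw [← inl_fst_add_inr_snd_eq (P (inr v))]
        rw [add_mul, inr_mul_inr]
        simp [inl_mul_inr]
      rw [e1, e2, fst_mul, inr_smul, inr_smul, map_add, map_smul, map_smul] at h
      simp only [fst_add, fst_smul, smul_eq_mul] at h
      have h' : fst (P (inr v)) * fst (P (inr w)) = 0 := by linear_combination -h
      exact h'
    intro v
    exact mul_self_eq_zero.mp (key v v)
  -- fst of P 1 is zero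
  have hα : fst (P 1) = 0 := by
    have h := congrArg fst (hP 1 1)
    have hP1 : P (P 1) = fst (P 1) • P 1 + P (inr (snd (P 1))) := by
      conv_lhs => rw [← inl_fst_add_inr_snd_eq (P 1), hinl]
      rw [map_add, map_smul]
    rw [fst_mul, one_mul, mul_one, map_add] at h
    rw [fst_add, hP1] at h
    simp only [fst_add, fst_smul, smul_eq_mul, hφ, add_zero, hP1] at h
    have : fst (P 1) * fst (P 1) = 0 := by linear_combination -h
    exact mul_self_eq_zero.mp this
  -- fst of P x is zero for all x
  have h0 : ∀ x, fst (P x) = 0 := by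
    intro x
    conv_lhs => rw [← inl_fst_add_inr_snd_eq x, hinl, map_add, map_smul]
    simp [hα, hφ]
  -- P x * P y = 0
  have hz : ∀ x y, P (x * P y + P x * y) = 0 := by
    intro x y
    rw [← hP]
    rw [hinr (P x) (h0 x), hinr (P y) (h0 y), inr_mul_inr]
  -- P (P 1) = 0
  have hPP1 : P (P 1) = 0 := by
    have h := hz 1 1
    rw [one_mul, mul_one, map_add] at h
    have h2 : (2 : K) • P (P 1) = 0 := by rw [two_smul]; exact h
    rcases smul_eq_zero.mp h2 with h' | h'
    · exact absurd h' two_ne_zero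
    · exact h'
  -- P (P (inr v)) = 0
  have hPPv : ∀ v : Fin n → K, P (P (inr v)) = 0 := by
    intro v
    have h := hz (inr v) 1
    rw [mul_one, hinr (P 1) (h0 1), inr_mul_inr, zero_add] at h
    exact h
  intro x
  conv_lhs => rw [← inl_fst_add_inr_snd_eq x, hinl, map_add, map_smul, map_add, map_smul]
  rw [hPP1, hPPv, smul_zero, add_zero]
end

section
/- A K-linear map P : R → R on the truncated polynomial algebra R = K ⊕ V is a Rota–Baxter operator of weight zero if and only if the image of P is contained in V and P² = 0. -/
open TrivSqZeroExt

section Aux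

variable {K : Type*} [Field K] {n : ℕ}

private lemma aux_mul_inr (z : TrivSqZeroExt K (Fin n → K)) (v : Fin n → K) :
    z * inr v = z.fst • inr v := by
  apply TrivSqZeroExt.ext
  · simp [fst_mul]
  · simp [snd_mul]

private lemma aux_inr_mul (v : Fin n → K) (z : TrivSqZeroExt K (Fin n → K)) :
    inr v * z = z.fst • inr v := by
  apply TrivSqZeroExt.ext
  · simp [fst_mul]
  · simp [snd_mul, op_smul_eq_smul]

private lemma aux_fst_zero_mul {a b : TrivSqZeroExt K (Fin n → K)}
    (ha : a.fst = 0) (hb : b.fst = 0) : a * b = 0 := by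
  apply TrivSqZeroExt.ext
  · simp [fst_mul, ha]
  · simp [snd_mul, ha, hb]

private lemma aux_eq_inr {z : TrivSqZeroExt K (Fin n → K)} (hz : z.fst = 0) :
    z = inr z.snd := by
  apply TrivSqZeroExt.ext <;> simp [hz]

private lemma aux_decomp (x : TrivSqZeroExt K (Fin n → K)) :
    x = x.fst • (1 : TrivSqZeroExt K (Fin n → K)) + inr x.snd := by
  apply TrivSqZeroExt.ext <;> simp

end Aux

/-- a `K`-linear map `P` on the truncated polynomial algebra `R = K ⊕ V`
is a Rota–Baxter operator of weight zero iff `im P ⊆ V` and `P² = 0`. -/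
theorem weight_zero_iff {K : Type*} [Field K] [CharZero K] {n : ℕ} (hn : 1 ≤ n)
    (P : TrivSqZeroExt K (Fin n → K) →ₗ[K] TrivSqZeroExt K (Fin n → K)) :
    (∀ x y, P x * P y = P (x * P y + P x * y)) ↔
      (∀ x, (P x).fst = 0) ∧ (∀ x, P (P x) = 0) := by
  constructor
  · intro h
    -- Step A : P kills fst on inr elements
    have hA : ∀ u : Fin n → K, (P (inr u)).fst = 0 := by
      intro u
      have h1 := h (inr u) (inr u)
      set c := (P (inr u)).fst with hc
      rw [aux_inr_mul u (P (inr u)), aux_mul_inr (P (inr u)) u, ← add_smul,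
        map_smul] at h1
      have h2 : c * c = (c + c) * c := by
        have := congrArg TrivSqZeroExt.fst h1
        simpa [fst_mul] using this
      have h3 : c * c = 0 := by linear_combination -h2
      exact mul_self_eq_zero.mp h3
    -- Step B : fst of P 1 is zero
    have hB : (P 1).fst = 0 := by
      have h1 := h 1 1
      rw [one_mul, mul_one] at h1
      set c := (P 1).fst with hc
      have hdec : P (P 1) = c • P 1 + P (inr (P 1).snd) := by
        conv_lhs => rw [aux_decomp (P 1)]
        rw [map_add, map_smul]
      have h2 : c * c = c * c + c * c := by
        have := congrArg TrivSqZeroExt.fst h1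
        simp [fst_mul, hdec, hA] at this
        exact this
      have h3 : c * c = 0 := by linear_combination -h2
      exact mul_self_eq_zero.mp h3
    have hfst : ∀ x, (P x).fst = 0 := by
      intro x
      conv_lhs => rw [aux_decomp x]
      simp [hB, hA]
    refine ⟨hfst, ?_⟩
    -- Step C : P ∘ P = 0
    have hC : ∀ y, (0 : TrivSqZeroExt K (Fin n → K)) = P (P y) + y.fst • P (P 1) := by
      intro y
      have h1 := h 1 y
      rw [one_mul] at h1
      have hP1 : P 1 * y = y.fst • P 1 := by
        rw [aux_eq_inr hB, aux_inr_mul]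
      rw [hP1, aux_fst_zero_mul (hfst 1) (hfst y), map_add, map_smul] at h1
      exact h1
    have hP1 : P (P 1) = 0 := by
      have := hC 1
      simp only [fst_one, one_smul] at this
      have h2 : (2 : K) • P (P 1) = 0 := by
        rw [two_smul]; exact this.symm
      have := smul_eq_zero.mp h2
      rcases this with h | h
      · exact absurd h two_ne_zero
      · exact h
    intro y
    have := hC y
    rw [hP1, smul_zero, add_zero] at this
    exact this.symm
  · rintro ⟨h1, h2⟩ x y
    have hx : x * P y = x.fst • P y := by
      rw [aux_eq_inr (h1 y), aux_mul_inr]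
    have hy : P x * y = y.fst • P x := by
      rw [aux_eq_inr (h1 x), aux_inr_mul]
    rw [aux_fst_zero_mul (h1 x) (h1 y), hx, hy, map_add, map_smul, map_smul, h2, h2,
      smul_zero, smul_zero, add_zero]
end

section
/- Let v₀ ∈ V and L ∈ End_K(V), and define the K-linear map P : R → R on the truncated polynomial algebra R = K ⊕ V by P(a + u) = a·v₀ + L(u) for a ∈ K, u ∈ V (so the image of P lies in V). Then P is a Rota–Baxter operator of weight zero if and only if L² = 0 and L(v₀) = 0. -/
open TrivSqZeroExt

/-- for `v₀ ∈ V` and `L ∈ End_K(V)`, the linear map `P` on the truncated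
polynomial algebra `R = K ⊕ V` given by `P(a + u) = a • v₀ + L u` (with image in `V`) is a
Rota–Baxter operator of weight zero iff `L² = 0` and `L v₀ = 0`. -/
theorem weight_zero_param {K : Type*} [Field K] [CharZero K] {n : ℕ} (hn : 1 ≤ n)
    (v₀ : Fin n → K) (L : (Fin n → K) →ₗ[K] (Fin n → K))
    (P : TrivSqZeroExt K (Fin n → K) →ₗ[K] TrivSqZeroExt K (Fin n → K))
    (hPdef : ∀ (a : K) (u : Fin n → K), P (inl a + inr u) = inr (a • v₀ + L u)) :
    (∀ x y, P x * P y = P (x * P y + P x * y)) ↔ (L ∘ₗ L = 0 ∧ L v₀ = 0) := by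
  have hP : ∀ x : TrivSqZeroExt K (Fin n → K), P x = inr (x.fst • v₀ + L x.snd) := by
    intro x
    have := hPdef x.fst x.snd
    rwa [inl_fst_add_inr_snd_eq] at this
  have key : ∀ x y : TrivSqZeroExt K (Fin n → K),
      (P x * P y = P (x * P y + P x * y)) ↔
      L (x.fst • (y.fst • v₀ + L y.snd) + y.fst • (x.fst • v₀ + L x.snd)) = 0 := by
    intro x y
    rw [hP x, hP y]
    have hx : x * inr (y.fst • v₀ + L y.snd)
        = (inr (x.fst • (y.fst • v₀ + L y.snd)) : TrivSqZeroExt K (Fin n → K)) := by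
      nth_rewrite 1 [← inl_fst_add_inr_snd_eq x]
      rw [add_mul, inl_mul_inr, inr_mul_inr, add_zero]
    have hy : (inr (x.fst • v₀ + L x.snd) : TrivSqZeroExt K (Fin n → K)) * y
        = inr (y.fst • (x.fst • v₀ + L x.snd)) := by
      nth_rewrite 1 [← inl_fst_add_inr_snd_eq y]
      rw [mul_add, inr_mul_inl, inr_mul_inr, add_zero, op_smul_eq_smul]
    rw [inr_mul_inr, hx, hy, ← inr_add, hP, snd_inr, fst_inr, zero_smul, zero_add,
      eq_comm, ← inr_zero K, inr_injective.eq_iff]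
  constructor
  · intro h
    constructor
    · refine LinearMap.ext fun v => ?_
      have := (key (inr v) (inl 1)).mp (h _ _)
      simpa using this
    · have := (key (inl 1) (inl 1)).mp (h _ _)
      simp only [fst_inl, snd_inl, map_zero, add_zero, one_smul, map_add] at this
      have h2 : (2 : K) • L v₀ = 0 := by
        rw [two_smul]; simpa using this
      have : L v₀ = 0 := by
        have h2' := smul_eq_zero.mp h2
        rcases h2' with h2' | h2'
        · exact absurd h2' two_ne_zero
        · exact h2'
      simpa using this
  · rintro ⟨hLL, hv⟩ x y
    rw [key]
    have hLLv : ∀ w, L (L w) = 0 := fun w => by simpa using LinearMap.ext_iff.mp hLL w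
    simp [map_add, map_smul, hv, hLLv]
end

section
/- The set of Rota–Baxter operators of weight zero on the truncated polynomial algebra R = K ⊕ V is in bijection with the set of pairs (v₀, L) ∈ V × End_K(V) satisfying L² = 0 and L(v₀) = 0, via P ↦ (P(1), P|_V). -/
open TrivSqZeroExt

section Aux

variable {K : Type*} [Field K] [CharZero K] {n : ℕ}

/-- The candidate Rota–Baxter operator determined by `(v₀, L)`. -/
def Pof (v₀ : Fin n → K) (L : (Fin n → K) →ₗ[K] (Fin n → K)) :
    TrivSqZeroExt K (Fin n → K) →ₗ[K] TrivSqZeroExt K (Fin n → K) where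
  toFun x := inr (x.fst • v₀ + L x.snd)
  map_add' x y := by
    simp [add_smul, map_add, ← inr_add]
    abel_nf
  map_smul' c x := by
    simp [smul_smul, map_smul, ← inr_smul, smul_add]

@[simp] lemma Pof_apply (v₀ : Fin n → K) (L : (Fin n → K) →ₗ[K] (Fin n → K))
    (x : TrivSqZeroExt K (Fin n → K)) :
    Pof v₀ L x = inr (x.fst • v₀ + L x.snd) := rfl

lemma Pof_rb (v₀ : Fin n → K) (L : (Fin n → K) →ₗ[K] (Fin n → K))
    (hL : L ∘ₗ L = 0) (hv : L v₀ = 0) (x y : TrivSqZeroExt K (Fin n → K)) :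
    Pof v₀ L x * Pof v₀ L y = Pof v₀ L (x * Pof v₀ L y + Pof v₀ L x * y) := by
  have hLL : ∀ m, L (L m) = 0 := fun m => congrFun (congrArg DFunLike.coe hL) m
  ext
  · simp [fst_mul]
  · simp [snd_mul, fst_mul, op_smul_eq_smul, hLL, hv]

end Aux

/-- the set of weight-zero Rota–Baxter operators on the truncated polynomial
algebra `R = K ⊕ V` is in bijection with `{(v₀, L) ∈ V × End_K(V) : L² = 0, L v₀ = 0}`,
via `P ↦ (P 1, P|_V)`. -/
theorem weight_zero_bijection {K : Type*} [Field K] [CharZero K] {n : ℕ} (hn : 1 ≤ n) :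
    ∃ e : {P : TrivSqZeroExt K (Fin n → K) →ₗ[K] TrivSqZeroExt K (Fin n → K) //
            ∀ x y, P x * P y = P (x * P y + P x * y)} ≃
          {p : (Fin n → K) × ((Fin n → K) →ₗ[K] (Fin n → K)) //
            p.2 ∘ₗ p.2 = 0 ∧ p.2 p.1 = 0},
      ∀ P, (e P : (Fin n → K) × ((Fin n → K) →ₗ[K] (Fin n → K))) =
        ((P.1 1).snd, (sndHom K (Fin n → K)) ∘ₗ P.1 ∘ₗ (inrHom K (Fin n → K))) := by
  -- abbreviations
  classical
  -- key structural facts about any Rota–Baxter operator P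
  have hφ : ∀ (P : TrivSqZeroExt K (Fin n → K) →ₗ[K] TrivSqZeroExt K (Fin n → K)),
      (∀ x y, P x * P y = P (x * P y + P x * y)) → ∀ u, (P (inr u)).fst = 0 := by
    intro P hP u
    set c : K := (P (inr u)).fst with hc
    have h1 : (inr u : TrivSqZeroExt K (Fin n → K)) * P (inr u) = inr (c • u) := by
      ext <;> simp [fst_mul, snd_mul, op_smul_eq_smul, hc]
    have h2 : P (inr u) * (inr u : TrivSqZeroExt K (Fin n → K)) = inr (c • u) := by
      ext <;> simp [fst_mul, snd_mul, op_smul_eq_smul, hc]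
    have key := congrArg fst (hP (inr u) (inr u))
    have e : P (inr (c • u)) = c • P (inr u) := by
      rw [← map_smul]
      congr 1
      ext <;> simp
    rw [h1, h2, fst_mul, map_add, e] at key
    simp only [← hc, fst_add, fst_smul, smul_eq_mul] at key
    have : c * c = 0 := by linear_combination -key
    exact mul_self_eq_zero.mp this
  have hdec : ∀ (P : TrivSqZeroExt K (Fin n → K) →ₗ[K] TrivSqZeroExt K (Fin n → K)) z,
      P z = z.fst • P 1 + P (inr z.snd) := by
    intro P z
    conv_lhs => rw [← inl_fst_add_inr_snd_eq z]
    rw [map_add]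
    congr 1
    rw [show (inl z.fst : TrivSqZeroExt K (Fin n → K)) = z.fst • 1 by ext <;> simp, map_smul]
  have hα : ∀ (P : TrivSqZeroExt K (Fin n → K) →ₗ[K] TrivSqZeroExt K (Fin n → K)),
      (∀ x y, P x * P y = P (x * P y + P x * y)) → (P 1).fst = 0 := by
    intro P hP
    have key := congrArg fst (hP 1 1)
    rw [one_mul, mul_one, fst_mul] at key
    rw [hdec P (P 1 + P 1)] at key
    simp only [fst_add, fst_smul, smul_eq_mul, hφ P hP, add_zero] at key
    have : (P 1).fst * (P 1).fst = 0 := by linear_combination -key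
    exact mul_self_eq_zero.mp this
  have hP1 : ∀ (P : TrivSqZeroExt K (Fin n → K) →ₗ[K] TrivSqZeroExt K (Fin n → K)),
      (∀ x y, P x * P y = P (x * P y + P x * y)) → P 1 = inr (P 1).snd := by
    intro P hP
    ext
    · simp [hα P hP]
    · simp
  have hPinr : ∀ (P : TrivSqZeroExt K (Fin n → K) →ₗ[K] TrivSqZeroExt K (Fin n → K)),
      (∀ x y, P x * P y = P (x * P y + P x * y)) → ∀ u, P (inr u) = inr (P (inr u)).snd := by
    intro P hP u
    ext
    · simp [hφ P hP]
    · simp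
  -- L ∘ L = 0
  have hL2 : ∀ (P : TrivSqZeroExt K (Fin n → K) →ₗ[K] TrivSqZeroExt K (Fin n → K)),
      (∀ x y, P x * P y = P (x * P y + P x * y)) →
      ∀ w, (P (inr (P (inr w)).snd)).snd = 0 := by
    intro P hP w
    have key := hP 1 (inr w)
    rw [one_mul, hP1 P hP, hPinr P hP w, inr_mul_inr, inr_mul_inr, add_zero,
      hPinr P hP ((P (inr w)).snd)] at key
    have := congrArg TrivSqZeroExt.snd key
    simpa using this.symm
  -- L v₀ = 0
  have hLv : ∀ (P : TrivSqZeroExt K (Fin n → K) →ₗ[K] TrivSqZeroExt K (Fin n → K)),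
      (∀ x y, P x * P y = P (x * P y + P x * y)) →
      (P (inr (P 1).snd)).snd = 0 := by
    intro P hP
    have key := hP 1 1
    rw [one_mul, mul_one] at key
    rw [hP1 P hP, inr_mul_inr, ← inr_add] at key
    have h0 := (congrArg TrivSqZeroExt.snd key).symm
    rw [inr_add, map_add, snd_add, snd_zero] at h0
    have h2 : (2 : K) • (P (inr (P 1).snd)).snd = 0 := by
      rw [two_smul]; exact h0
    rcases smul_eq_zero.mp h2 with h | h
    · exact absurd h two_ne_zero
    · exact h
  refine ⟨{
    toFun := fun P => ⟨((P.1 1).snd, (sndHom K (Fin n → K)) ∘ₗ P.1 ∘ₗ (inrHom K (Fin n → K))),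
      ?_, ?_⟩
    invFun := fun p => ⟨Pof p.1.1 p.1.2, Pof_rb p.1.1 p.1.2 p.2.1 p.2.2⟩
    left_inv := ?_
    right_inv := ?_ }, fun P => rfl⟩
  · apply LinearMap.ext
    intro w
    simpa using hL2 P.1 P.2 w
  · simpa using hLv P.1 P.2
  · rintro ⟨P, hP⟩
    apply Subtype.ext
    apply LinearMap.ext
    intro z
    simp only [Pof_apply]
    rw [hdec P z, hP1 P hP, hPinr P hP, ← inr_smul, ← inr_add]
    rfl
  · rintro ⟨⟨v₀, L⟩, hL, hv⟩
    apply Subtype.ext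
    refine Prod.ext ?_ ?_
    · simp
    · ext u
      simp
end

section
/- Let P : R → R be a Rota–Baxter operator of weight one on the truncated polynomial algebra R = K ⊕ V. Then P maps V into V, i.e. P(V) ⊆ V. -/
open TrivSqZeroExt

/-- if `P` is a Rota–Baxter operator of weight one on the truncated
polynomial algebra `R = K ⊕ V`, then `P(V) ⊆ V`. -/
theorem weight_one_maps_V_to_V {K : Type*} [Field K] [CharZero K] {n : ℕ} (hn : 1 ≤ n)
    (P : TrivSqZeroExt K (Fin n → K) →ₗ[K] TrivSqZeroExt K (Fin n → K))
    (hP : ∀ x y, P x * P y = P (x * P y + P x * y + (1 : K) • (x * y))) :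
    ∀ u : Fin n → K, (P (inr u)).fst = 0 := by
  intro u
  set a : K := (P (inr u)).fst with ha
  have key : ∀ z : TrivSqZeroExt K (Fin n → K),
      (inr u : TrivSqZeroExt K (Fin n → K)) * z = z.fst • inr u := by
    intro z
    ext
    · simp
    · simp [op_smul_eq_smul]
  have key2 : ∀ z : TrivSqZeroExt K (Fin n → K),
      z * (inr u : TrivSqZeroExt K (Fin n → K)) = z.fst • inr u := by
    intro z
    ext
    · simp
    · simp [op_smul_eq_smul]
  have h := hP (inr u) (inr u)
  rw [key (P (inr u)), key2 (P (inr u)), inr_mul_inr, smul_zero, add_zero,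
    ← two_smul K (a • (inr u : TrivSqZeroExt K (Fin n → K))), smul_smul,
    map_smul] at h
  have hf := congrArg TrivSqZeroExt.fst h
  simp only [fst_mul, fst_smul, smul_eq_mul, ← ha] at hf
  -- hf : a * a = (2 * a) * a
  have h0 : a * a = 0 := by linear_combination (-1 : K) * hf
  exact mul_self_eq_zero.mp h0
end

section
/- Let P : R → R be a Rota–Baxter operator of weight one on the truncated polynomial algebra R = K ⊕ V. Then P(1) is a scalar, and P(1) = 0 or P(1) = -1. -/
open TrivSqZeroExt

/-- if `P` is a Rota–Baxter operator of weight one on the truncated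
polynomial algebra `R = K ⊕ V`, then `P 1` is a scalar, and `P 1 = 0` or `P 1 = -1`. -/
theorem weight_one_P_one {K : Type*} [Field K] [CharZero K] {n : ℕ} (hn : 1 ≤ n)
    (P : TrivSqZeroExt K (Fin n → K) →ₗ[K] TrivSqZeroExt K (Fin n → K))
    (hP : ∀ x y, P x * P y = P (x * P y + P x * y + (1 : K) • (x * y))) :
    P 1 = 0 ∨ P 1 = -1 := by
  set a : K := fst (P 1) with ha
  set v : Fin n → K := snd (P 1) with hv
  have hfst : ∀ u : Fin n → K, fst (P (inr u)) = 0 := by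
    intro u
    have harg : (inr u : TrivSqZeroExt K (Fin n → K)) * P (inr u) + P (inr u) * inr u
        + (1 : K) • (inr u * inr u) = (2 * fst (P (inr u))) • inr u := by
      ext
      · simp
      · simp; ring
    have h := congrArg fst (hP (inr u) (inr u))
    rw [harg, map_smul] at h
    simp only [fst_mul, fst_smul, smul_eq_mul] at h
    have h2 : fst (P (inr u)) * fst (P (inr u)) = 0 := by linear_combination -h
    exact mul_self_eq_zero.mp h2
  have hdec : P 1 = a • 1 + inr v := by ext <;> simp <;> rfl
  set w : Fin n → K := snd (P (inr v)) with hw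
  have hPinrv : P (inr v) = inr w := by
    ext
    · simp [hfst v]
    · simp; rfl
  -- equation from hP 1 1
  have h11 := hP 1 1
  have harg11 : (1 : TrivSqZeroExt K (Fin n → K)) * P 1 + P 1 * 1 + (1:K) • (1*1)
      = (2*a) • 1 + (2:K) • inr v + 1 := by
    ext <;> simp <;> ring
  rw [harg11, map_add, map_add, map_smul, map_smul, hPinrv] at h11
  have h11f := congrArg fst h11
  simp only [fst_mul, fst_add, fst_smul, fst_inr, fst_one, smul_eq_mul, mul_one, mul_zero,
    add_zero] at h11f
  have haa : a * a + a = 0 := by linear_combination -h11f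
  have h11s := congrArg snd h11
  simp only [snd_mul, snd_add, snd_smul, snd_inr, snd_one, fst_smul, fst_one,
    op_smul_eq_smul] at h11s
  have hvw : v = (-2 : K) • w := by
    linear_combination (norm := module) -h11s
  -- equation from hP 1 (inr v)
  have h1v := hP 1 (inr v)
  have harg2 : (1 : TrivSqZeroExt K (Fin n → K)) * P (inr v) + P 1 * inr v
      + (1:K) • ((1 : TrivSqZeroExt K (Fin n → K)) * inr v) = ((2⁻¹ : K) + a) • inr v := by
    rw [hPinrv]
    ext
    · simp
    · simp [hvw]; ring
  rw [harg2, map_smul, hPinrv] at h1v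
  have h1vs := congrArg snd h1v
  simp only [snd_mul, snd_smul, snd_inr, fst_inr, MulOpposite.op_zero, zero_smul,
    add_zero] at h1vs
  -- h1vs : a • w = (2⁻¹ + a) • w
  have hw0 : w = 0 := by
    have h2 : (2⁻¹ : K) • w = 0 := by
      linear_combination (norm := module) -h1vs
    have := smul_eq_zero.mp h2
    rcases this with h | h
    · exact absurd h (by norm_num)
    · exact h
  have hv0 : v = 0 := by rw [hvw, hw0, smul_zero]
  have hP1 : P 1 = a • 1 := by rw [hdec, hv0, inr_zero, add_zero]
  have haor : a = 0 ∨ a = -1 := by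
    have h2 : a * (a + 1) = 0 := by linear_combination haa
    rcases mul_eq_zero.mp h2 with h | h
    · exact Or.inl h
    · exact Or.inr (by linear_combination h)
  rcases haor with h | h
  · left; rw [hP1, h, zero_smul]
  · right; rw [hP1, h, neg_smul, one_smul]
end

section
/- A K-linear map P : R → R on the truncated polynomial algebra R = K ⊕ V is a Rota–Baxter operator of weight one if and only if there exist a scalar α ∈ {0, -1} ⊆ K and an idempotent Q ∈ End_K(V) (Q² = Q) such that P(a + u) = α·a - Q(u) for all a ∈ K and u ∈ V. -/
open TrivSqZeroExt

/-- a `K`-linear map `P` on the truncated polynomial algebra `R = K ⊕ V`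
is a Rota–Baxter operator of weight one iff there are `α ∈ {0, -1}` and an idempotent
`Q ∈ End_K(V)` with `P(a + u) = α • a - Q u`. -/
theorem weight_one_iff {K : Type*} [Field K] [CharZero K] {n : ℕ} (hn : 1 ≤ n)
    (P : TrivSqZeroExt K (Fin n → K) →ₗ[K] TrivSqZeroExt K (Fin n → K)) :
    (∀ x y, P x * P y = P (x * P y + P x * y + (1 : K) • (x * y))) ↔
      ∃ (α : K) (Q : (Fin n → K) →ₗ[K] (Fin n → K)),
        (α = 0 ∨ α = -1) ∧ Q ∘ₗ Q = Q ∧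
        ∀ (a : K) (u : Fin n → K), P (inl a + inr u) = inl (α * a) - inr (Q u) := by
  have hlin_add : ∀ m m' : Fin n → K, P (inr (m + m')) = P (inr m) + P (inr m') :=
    fun m m' => by rw [inr_add, map_add]
  have hlin_smul : ∀ (c : K) (m : Fin n → K), P (inr (c • m)) = c • P (inr m) :=
    fun c m => by rw [inr_smul, map_smul]
  constructor
  · intro h
    -- the scalar part of P on inr vanishes
    have hf : ∀ u : Fin n → K, fst (P (inr u)) = 0 := by
      intro u
      have harg : (inr u : TrivSqZeroExt K (Fin n → K)) * P (inr u)
          + P (inr u) * inr u + (1 : K) • (inr u * inr u)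
            = (2 * fst (P (inr u))) • inr u := by
        rw [inr_mul_inr, smul_zero, add_zero]
        conv_lhs => rw [← inl_fst_add_inr_snd_eq (P (inr u))]
        simp [mul_add, add_mul, inl_mul_inr, inr_mul_inl, inr_mul_inr,
          op_smul_eq_smul, two_mul, add_smul]
      have h1 := congrArg fst (h (inr u) (inr u))
      rw [harg, map_smul, fst_mul, fst_smul, smul_eq_mul] at h1
      have : fst (P (inr u)) * fst (P (inr u)) = 0 := by linear_combination -h1
      exact mul_self_eq_zero.mp this
    have hPinr : ∀ v : Fin n → K, P (inr v) = inr (snd (P (inr v))) := by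
      intro v
      conv_lhs => rw [← inl_fst_add_inr_snd_eq (P (inr v))]
      rw [hf, inl_zero, zero_add]
    have hP1m : ∀ m : Fin n → K, P 1 * inr m = inr (fst (P 1) • m) := by
      intro m
      conv_lhs => rw [← inl_fst_add_inr_snd_eq (P 1)]
      rw [add_mul, inl_mul_inr, inr_mul_inr, add_zero]
    -- g² = -g
    have hg2 : ∀ v : Fin n → K,
        snd (P (inr (snd (P (inr v))))) = -snd (P (inr v)) := by
      intro v
      have h2 := congrArg snd (h 1 (inr v))
      rw [one_mul, one_mul, hPinr v] at h2
      simp only [hP1m] at h2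
      rw [one_smul, ← inr_add, ← inr_add, hlin_add, hlin_add, hlin_smul] at h2
      simp only [snd_add, snd_smul, snd_inr] at h2
      linear_combination (norm := module) -h2
    -- relations from h 1 1
    have hP1 : P 1 = inl (fst (P 1)) + inr (snd (P 1)) := (inl_fst_add_inr_snd_eq _).symm
    have hPP1 : P (P 1) = fst (P 1) • P 1 + P (inr (snd (P 1))) := by
      conv_lhs => rw [hP1]
      rw [map_add]
      congr 1
      rw [show (inl (fst (P 1)) : TrivSqZeroExt K (Fin n → K)) = fst (P 1) • 1 by
        ext <;> simp, map_smul]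
    have h3 := h 1 1
    rw [one_mul, mul_one, mul_one, one_smul, map_add, map_add, hPP1] at h3
    have hP11 : P 1 * P 1
        = inl (fst (P 1) * fst (P 1)) + inr ((2 * fst (P 1)) • snd (P 1)) := by
      conv_lhs => rw [hP1]
      refine TrivSqZeroExt.ext ?_ ?_
      · simp [fst_mul]
      · simp only [snd_mul, fst_add, snd_add, fst_inl, snd_inl, fst_inr, snd_inr,
          op_smul_eq_smul, add_zero, zero_add, smul_zero]
        module
    rw [hP11] at h3
    have hfst3 := congrArg fst h3
    simp only [fst_add, fst_inl, fst_inr, fst_smul, fst_one, smul_eq_mul,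
      hf (snd (P 1)), add_zero] at hfst3
    have hAA : fst (P 1) * fst (P 1) + fst (P 1) = 0 := by linear_combination -hfst3
    have hsnd3 := congrArg snd h3
    simp only [snd_add, snd_inl, snd_inr, snd_smul, snd_one, zero_add, add_zero] at hsnd3
    have hkey : snd (P 1) + (2 : K) • snd (P (inr (snd (P 1)))) = 0 := by
      linear_combination (norm := module) -hsnd3
    have hgw0 : snd (P (inr (snd (P 1)))) = 0 := by
      have h5 := congrArg (fun m => snd (P (inr m))) hkey
      simp only [hlin_add, hlin_smul, snd_add, snd_smul, inr_zero, map_zero,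
        snd_zero, hg2 (snd (P 1))] at h5
      linear_combination (norm := module) -h5
    have hw0 : snd (P 1) = 0 := by
      have h6 := hkey
      rw [hgw0] at h6
      simpa using h6
    have hP1' : P 1 = inl (fst (P 1)) := by
      conv_lhs => rw [hP1]
      rw [hw0, inr_zero, add_zero]
    refine ⟨fst (P 1),
      -((sndHom K (Fin n → K)) ∘ₗ (P : TrivSqZeroExt K (Fin n → K) →ₗ[K] _)
          ∘ₗ (inrHom K (Fin n → K))), ?_, ?_, ?_⟩
    · rcases mul_eq_zero.mp
          (show fst (P 1) * (fst (P 1) + 1) = 0 by linear_combination hAA)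
        with h' | h'
      · exact Or.inl h'
      · exact Or.inr (by linear_combination h')
    · refine LinearMap.ext fun u => ?_
      simp only [LinearMap.comp_apply, LinearMap.neg_apply, sndHom_apply, inrHom_apply]
      rw [inr_neg, map_neg, snd_neg, neg_neg, hg2 u]
    · intro a u
      have hdec : P (inl a + inr u) = a • P 1 + P (inr u) := by
        rw [map_add]
        congr 1
        rw [show (inl a : TrivSqZeroExt K (Fin n → K)) = a • 1 by ext <;> simp, map_smul]
      conv_lhs => rw [hdec, hP1', hPinr u]
      simp only [LinearMap.comp_apply, LinearMap.neg_apply, sndHom_apply, inrHom_apply,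
        inr_neg, sub_neg_eq_add]
      congr 1
      rw [← inl_smul, smul_eq_mul, mul_comm]
  · rintro ⟨α, Q, hα, hQ, hP⟩
    have hα2 : α * α = -α := by rcases hα with h' | h' <;> simp [h']
    have hQQ : ∀ m, Q (Q m) = Q m := fun m => by
      simpa using LinearMap.congr_fun hQ m
    have hP' : ∀ z : TrivSqZeroExt K (Fin n → K),
        P z = inl (α * fst z) - inr (Q (snd z)) := by
      intro z
      conv_lhs => rw [← inl_fst_add_inr_snd_eq z]
      exact hP _ _
    intro x y
    refine TrivSqZeroExt.ext ?_ ?_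
    · simp only [hP', fst_mul, fst_add, fst_sub, fst_inl, fst_inr, fst_smul,
        smul_eq_mul, sub_zero]
      linear_combination (-(fst x * fst y)) * hα2
    · simp only [hP', snd_mul, snd_add, snd_sub, snd_inl, snd_inr, snd_smul,
        fst_mul, fst_add, fst_sub, fst_inl, fst_inr, fst_smul,
        smul_eq_mul, sub_zero, zero_sub, op_smul_eq_smul,
        map_add, map_smul, map_neg, map_sub, hQQ, one_smul, smul_neg, neg_neg]
      module
end

section
/- The set of Rota–Baxter operators of weight one on the truncated polynomial algebra R = K ⊕ V is in bijection with the Cartesian product {0, -1} × {Q ∈ End_K(V) : Q² = Q}; equivalently, it is (isomorphic to) the disjoint union of two copies of the set of idempotent n × n matrices over K, via P ↦ (P(1), -P|_V). -/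
open TrivSqZeroExt

section RBAux

variable {K : Type*} [Field K] {n : ℕ}

/-- The candidate Rota–Baxter operator attached to a scalar `α` and `Q : V →ₗ V`. -/
noncomputable def rbMk (α : K) (Q : (Fin n → K) →ₗ[K] (Fin n → K)) :
    TrivSqZeroExt K (Fin n → K) →ₗ[K] TrivSqZeroExt K (Fin n → K) where
  toFun x := inl (α * fst x) - inr (Q (snd x))
  map_add' x y := by
    refine TrivSqZeroExt.ext (by simp [mul_add]) ?_
    simp [add_comm]
  map_smul' c x := by refine TrivSqZeroExt.ext ?_ ?_ <;> simp [mul_left_comm]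

@[simp] lemma rbMk_apply (α : K) (Q : (Fin n → K) →ₗ[K] (Fin n → K))
    (x : TrivSqZeroExt K (Fin n → K)) :
    rbMk α Q x = inl (α * fst x) - inr (Q (snd x)) := rfl

lemma rbMk_rb (α : K) (Q : (Fin n → K) →ₗ[K] (Fin n → K))
    (hα : α * α + α = 0) (hQ : Q ∘ₗ Q = Q) :
    ∀ x y, rbMk α Q x * rbMk α Q y =
      rbMk α Q (x * rbMk α Q y + rbMk α Q x * y + (1 : K) • (x * y)) := by
  have hQ' : ∀ m, Q (Q m) = Q m := fun m => DFunLike.congr_fun hQ m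
  intro x y
  refine TrivSqZeroExt.ext ?_ ?_
  · simp only [rbMk_apply, fst_mul, fst_add, fst_sub, fst_inl, fst_inr, fst_smul, sub_zero,
      smul_eq_mul, one_mul]
    linear_combination (-(fst x * fst y)) * hα
  · simp only [rbMk_apply, snd_mul, snd_add, snd_sub, snd_inl, snd_inr, fst_add, fst_sub,
      fst_inl, fst_inr, fst_mul, fst_smul, snd_smul, sub_zero, zero_sub, smul_neg,
      op_smul_eq_smul, map_add, map_smul, map_neg, hQ', smul_eq_mul, one_mul, one_smul]
    module

end RBAux

section Extract

variable {K : Type*} [Field K] [CharZero K] {n : ℕ}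
  (P : TrivSqZeroExt K (Fin n → K) →ₗ[K] TrivSqZeroExt K (Fin n → K))
  (hP : ∀ x y, P x * P y = P (x * P y + P x * y + (1 : K) • (x * y)))

include hP

omit [CharZero K] in
lemma rb_fst_inr (w : Fin n → K) : fst (P (inr w)) = 0 := by
  have h := hP (inr w) (inr w)
  have harg : (inr w : TrivSqZeroExt K (Fin n → K)) * P (inr w) + P (inr w) * inr w
      + (1 : K) • (inr w * inr w) = inr ((2 * fst (P (inr w))) • w) := by
    refine TrivSqZeroExt.ext ?_ ?_
    · simp [fst_mul]
    · simp only [snd_add, snd_smul, snd_mul, snd_inr, fst_inr, op_smul_eq_smul, smul_zero,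
        zero_smul, add_zero, zero_add, two_mul, add_smul, one_smul, mul_smul]
  rw [harg] at h
  have h2 : inr ((2 * fst (P (inr w))) • w) = (2 * fst (P (inr w))) • (inr w :
      TrivSqZeroExt K (Fin n → K)) := by
    refine TrivSqZeroExt.ext ?_ ?_ <;> simp
  rw [h2, map_smul] at h
  have hfst := congrArg fst h
  simp only [fst_mul, fst_smul, smul_eq_mul] at hfst
  have : fst (P (inr w)) * fst (P (inr w)) = 0 := by linear_combination -hfst
  exact mul_self_eq_zero.mp this

omit [CharZero K] in
lemma rb_g_sq (w : Fin n → K) :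
    snd (P (inr (snd (P (inr w))))) = -snd (P (inr w)) := by
  have h := hP 1 (inr w)
  have harg : (1 : TrivSqZeroExt K (Fin n → K)) * P (inr w) + P 1 * inr w
      + (1 : K) • ((1 : TrivSqZeroExt K (Fin n → K)) * inr w)
      = inr (snd (P (inr w))) + (fst (P 1) + 1) • inr w := by
    refine TrivSqZeroExt.ext ?_ ?_
    · simp [fst_mul, rb_fst_inr P hP]
    · simp only [snd_add, snd_smul, snd_mul, snd_inr, fst_inr, fst_one, snd_one,
        op_smul_eq_smul, smul_zero, zero_smul, add_zero, zero_add, add_smul, one_smul,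
        fst_smul, fst_mul, one_mul]
      module
  rw [harg, map_add, map_smul] at h
  have hsnd := congrArg snd h
  simp only [snd_mul, snd_add, snd_smul, op_smul_eq_smul, rb_fst_inr P hP, zero_smul,
    add_zero, snd_one, smul_zero, fst_one, one_smul] at hsnd
  have h' := eq_sub_of_add_eq hsnd.symm
  rw [h']
  module

omit [CharZero K] in
lemma rb_one_arg : (1 : TrivSqZeroExt K (Fin n → K)) * P 1 + P 1 * 1
      + (1 : K) • ((1 : TrivSqZeroExt K (Fin n → K)) * 1)
      = (2 * fst (P 1) + 1) • 1 + (2 : K) • inr (snd (P 1)) := by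
  refine TrivSqZeroExt.ext ?_ ?_
  · simp [fst_mul, two_mul]
  · simp only [snd_add, snd_smul, snd_mul, snd_one, snd_inr, fst_one, op_smul_eq_smul,
      smul_zero, zero_smul, add_zero, zero_add, add_smul, one_smul, fst_smul, fst_mul, one_mul,
      two_smul]

omit [CharZero K] in
lemma rb_alpha : fst (P 1) * fst (P 1) + fst (P 1) = 0 := by
  have h := hP 1 1
  rw [rb_one_arg P hP, map_add, map_smul, map_smul] at h
  have hfst := congrArg fst h
  simp only [fst_mul, fst_add, fst_smul, smul_eq_mul, fst_inr, mul_zero, add_zero,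
    fst_one, mul_one] at hfst
  rw [rb_fst_inr P hP] at hfst
  linear_combination -hfst

lemma rb_v : snd (P 1) = 0 := by
  have h := hP 1 1
  rw [rb_one_arg P hP, map_add, map_smul, map_smul] at h
  have hsnd := congrArg snd h
  simp only [snd_mul, snd_add, snd_smul, op_smul_eq_smul, snd_one, smul_zero,
    add_zero, fst_one, one_smul] at hsnd
  have hGv : (2 : K) • snd (P (inr (snd (P 1)))) = -snd (P 1) := by
    have h' : (2 : K) • snd (P (inr (snd (P 1)))) =
        fst (P 1) • snd (P 1) + fst (P 1) • snd (P 1) - (2 * fst (P 1) + 1) • snd (P 1) := by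
      rw [eq_sub_iff_add_eq, add_comm]
      exact hsnd.symm
    rw [h']
    simp only [two_mul, add_smul, one_smul]
    module
  have h3 := congrArg (fun m => snd (P m)) (congrArg inr hGv)
  simp only [inr_neg, map_neg, snd_neg] at h3
  rw [show (inr ((2 : K) • snd (P (inr (snd (P 1))))) : TrivSqZeroExt K (Fin n → K))
      = (2 : K) • inr (snd (P (inr (snd (P 1))))) from
        TrivSqZeroExt.ext (by simp) (by simp), map_smul, snd_smul, rb_g_sq P hP] at h3
  have h5 : (2 : K) • snd (P (inr (snd (P 1)))) = snd (P (inr (snd (P 1)))) := by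
    have := congrArg Neg.neg h3
    simpa [smul_neg] using this
  have h6 : ((2 : K) - 1) • snd (P (inr (snd (P 1)))) = 0 := by
    rw [sub_smul, one_smul, h5, sub_self]
  rw [show (2 : K) - 1 = 1 by norm_num, one_smul] at h6
  rw [h6, smul_zero] at hGv
  simpa using hGv.symm

lemma rb_eq :
    P = rbMk (fst (P 1)) (-(sndHom K (Fin n → K) ∘ₗ P ∘ₗ inrHom K (Fin n → K))) := by
  ext x : 1
  have hx : x = x.fst • (1 : TrivSqZeroExt K (Fin n → K)) + inr x.snd :=
    TrivSqZeroExt.ext (by simp) (by simp)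
  rw [show P x = P (x.fst • (1 : TrivSqZeroExt K (Fin n → K)) + inr x.snd) from by rw [← hx],
    map_add, map_smul]
  refine TrivSqZeroExt.ext ?_ ?_
  · simp [rb_fst_inr P hP, mul_comm]
  · simp [rb_v P hP]

end Extract

/-- the set of weight-one Rota–Baxter operators on the truncated polynomial
algebra `R = K ⊕ V` is in bijection with `{0, -1} × {Q ∈ End_K(V) : Q² = Q}`
(equivalently, a disjoint union of two copies of the set of idempotents),
via `P ↦ (P 1, -P|_V)`. -/
theorem weight_one_bijection {K : Type*} [Field K] [CharZero K] {n : ℕ} (hn : 1 ≤ n) :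
    ∃ e : {P : TrivSqZeroExt K (Fin n → K) →ₗ[K] TrivSqZeroExt K (Fin n → K) //
            ∀ x y, P x * P y = P (x * P y + P x * y + (1 : K) • (x * y))} ≃
          ({α : K // α = 0 ∨ α = -1} ×
            {Q : (Fin n → K) →ₗ[K] (Fin n → K) // Q ∘ₗ Q = Q}),
      ∀ P, ((e P).1 : K) = (P.1 1).fst ∧
        ((e P).2 : (Fin n → K) →ₗ[K] (Fin n → K)) =
          -((sndHom K (Fin n → K)) ∘ₗ P.1 ∘ₗ (inrHom K (Fin n → K))) := by
  refine ⟨⟨fun P => ⟨⟨fst (P.1 1), ?_⟩,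
      ⟨-(sndHom K (Fin n → K) ∘ₗ P.1 ∘ₗ inrHom K (Fin n → K)), ?_⟩⟩,
      fun p => ⟨rbMk p.1.1 p.2.1, rbMk_rb _ _ ?_ p.2.2⟩, ?_, ?_⟩, fun P => ⟨rfl, rfl⟩⟩
  · have h := rb_alpha P.1 P.2
    have : fst (P.1 1) * (fst (P.1 1) + 1) = 0 := by linear_combination h
    rcases mul_eq_zero.mp this with h' | h'
    · exact Or.inl h'
    · exact Or.inr (by linear_combination h')
  · refine LinearMap.ext fun w => ?_
    have hg := rb_g_sq P.1 P.2 w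
    simp only [LinearMap.comp_apply, LinearMap.neg_apply, sndHom_apply, inrHom_apply]
    rw [inr_neg, map_neg, snd_neg, hg, neg_neg]
  · rcases p.1.2 with h | h <;> rw [h] <;> ring
  · intro P
    exact Subtype.ext (rb_eq P.1 P.2).symm
  · rintro ⟨⟨α, hα⟩, ⟨Q, hQ⟩⟩
    refine Prod.ext (Subtype.ext ?_) (Subtype.ext ?_)
    · simp
    · refine LinearMap.ext fun w => ?_
      simp
end

section
/- Let λ ∈ K with λ ≠ 0. A K-linear map P : R → R on the truncated polynomial algebra R = K ⊕ V is a Rota–Baxter operator of weight λ if and only if there exist a scalar α ∈ {0, -1} ⊆ K and an idempotent Q ∈ End_K(V) (Q² = Q) such that P(a + u) = λ·α·a - λ·Q(u) for all a ∈ K and u ∈ V. -/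
open TrivSqZeroExt

/-- for `λ ≠ 0`, a `K`-linear map `P` on the truncated polynomial algebra
`R = K ⊕ V` is a Rota–Baxter operator of weight `λ` iff there are `α ∈ {0, -1}` and an
idempotent `Q ∈ End_K(V)` with `P(a + u) = λ·α·a - λ·Q u`. -/
theorem weight_lambda_iff {K : Type*} [Field K] [CharZero K] {n : ℕ} (hn : 1 ≤ n)
    (lam : K) (hlam : lam ≠ 0)
    (P : TrivSqZeroExt K (Fin n → K) →ₗ[K] TrivSqZeroExt K (Fin n → K)) :
    (∀ x y, P x * P y = P (x * P y + P x * y + lam • (x * y))) ↔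
      ∃ (α : K) (Q : (Fin n → K) →ₗ[K] (Fin n → K)),
        (α = 0 ∨ α = -1) ∧ Q ∘ₗ Q = Q ∧
        ∀ (a : K) (u : Fin n → K),
          P (inl a + inr u) = inl (lam * α * a) - inr (lam • Q u) := by
  constructor
  · intro h
    set p : K := (P (inl 1)).fst with hp
    set w : Fin n → K := (P (inl 1)).snd with hw
    set f : (Fin n → K) → K := fun u => (P (inr u)).fst with hf
    set g : (Fin n → K) → (Fin n → K) := fun u => (P (inr u)).snd with hg
    have hf_smul : ∀ (c : K) u, f (c • u) = c * f u := by
      intro c u; simp only [hf]; rw [inr_smul, map_smul, fst_smul, smul_eq_mul]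
    have hf_add : ∀ u v, f (u + v) = f u + f v := by
      intro u v; simp only [hf]; rw [inr_add, map_add, fst_add]
    have hg_smul : ∀ (c : K) u, g (c • u) = c • g u := by
      intro c u; simp only [hg]; rw [inr_smul, map_smul, snd_smul]
    have hg_add : ∀ u v, g (u + v) = g u + g v := by
      intro u v; simp only [hg]; rw [inr_add, map_add, snd_add]
    have hf0 : f 0 = 0 := by simp [hf]
    have hg0 : g 0 = 0 := by simp [hg]
    have hPf : ∀ x, (P x).fst = x.fst * p + f x.snd := by
      intro x
      conv_lhs => rw [← inl_fst_add_inr_snd_eq x]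
      rw [map_add, fst_add]
      congr 1
      have : (inl x.fst : TrivSqZeroExt K (Fin n → K)) = x.fst • inl 1 := by
        rw [← inl_smul, smul_eq_mul, mul_one]
      rw [this, map_smul, fst_smul, smul_eq_mul]
    have hPs : ∀ x, (P x).snd = x.fst • w + g x.snd := by
      intro x
      conv_lhs => rw [← inl_fst_add_inr_snd_eq x]
      rw [map_add, snd_add]
      congr 1
      have : (inl x.fst : TrivSqZeroExt K (Fin n → K)) = x.fst • inl 1 := by
        rw [← inl_smul, smul_eq_mul, mul_one]
      rw [this, map_smul, snd_smul]
    have E4 : ∀ u : Fin n → K, f u = 0 := by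
      intro u
      have := congrArg fst (h (inr u) (inr u))
      simp only [fst_mul, snd_mul, fst_add, snd_add, fst_smul, snd_smul, fst_inr, snd_inr,
        op_smul_eq_smul, smul_eq_mul, hPf, hPs, hf_add, hf_smul, hg_add, hg_smul, hf0, hg0]
        at this
      ring_nf at this
      have h2 : f u ^ 2 = 0 := by linear_combination -this
      exact pow_eq_zero_iff (two_ne_zero) |>.mp h2
    have E2 : ∀ v : Fin n → K, g (g v) = (-lam) • g v := by
      intro v
      have := congrArg snd (h (inl 1) (inr v))
      simp only [fst_mul, snd_mul, fst_add, snd_add, fst_smul, snd_smul, fst_inl, snd_inl,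
        fst_inr, snd_inr, op_smul_eq_smul, smul_eq_mul, hPf, hPs, hf_add, hf_smul, hg_add,
        hg_smul, hf0, hg0, E4] at this
      funext i
      have h3 := congrFun this i
      simp only [Pi.add_apply, Pi.smul_apply, Pi.zero_apply, smul_eq_mul, Pi.neg_apply,
        neg_mul, one_mul, mul_zero, zero_mul, add_zero, zero_add, mul_one] at h3 ⊢
      linear_combination -h3
    have E1f : p * p + lam * p = 0 := by
      have := congrArg fst (h (inl 1) (inl 1))
      simp only [fst_mul, snd_mul, fst_add, snd_add, fst_smul, snd_smul, fst_inl, snd_inl,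
        fst_inr, snd_inr, op_smul_eq_smul, smul_eq_mul, hPf, hPs, hf_add, hf_smul, hg_add,
        hg_smul, hf0, hg0, E4] at this
      linear_combination -this
    have E1s : lam • w + (2:K) • g w = 0 := by
      have := congrArg snd (h (inl 1) (inl 1))
      simp only [fst_mul, snd_mul, fst_add, snd_add, fst_smul, snd_smul, fst_inl, snd_inl,
        fst_inr, snd_inr, op_smul_eq_smul, smul_eq_mul, hPf, hPs, hf_add, hf_smul, hg_add,
        hg_smul, hf0, hg0, E4] at this
      funext i
      have h3 := congrFun this i
      simp only [Pi.add_apply, Pi.smul_apply, Pi.zero_apply, smul_eq_mul, Pi.neg_apply,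
        neg_mul, one_mul, mul_zero, zero_mul, add_zero, zero_add, mul_one] at h3 ⊢
      linear_combination -h3
    have hgw : g w = 0 := by
      have h2 : g (lam • w + (2:K) • g w) = g 0 := congrArg g E1s
      rw [hg_add, hg_smul, hg_smul, hg0, E2] at h2
      funext i
      have h3 := congrFun h2 i
      simp only [Pi.add_apply, Pi.smul_apply, Pi.zero_apply, smul_eq_mul, Pi.neg_apply,
        neg_mul] at h3 ⊢
      have h4 : lam * (g w i) = 0 := by linear_combination -h3
      exact (mul_eq_zero.mp h4).resolve_left hlam
    have hw0 : w = 0 := by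
      rw [hgw, smul_zero, add_zero] at E1s
      exact (smul_eq_zero.mp E1s).resolve_left hlam
    refine ⟨p * lam⁻¹,
      (-(lam⁻¹)) • ((sndHom K (Fin n → K)) ∘ₗ (P ∘ₗ (inrHom K (Fin n → K)))), ?_, ?_, ?_⟩
    · have h2 : p * (p + lam) = 0 := by linear_combination E1f
      rcases mul_eq_zero.mp h2 with h3 | h3
      · left; rw [h3, zero_mul]
      · right
        have : p = -lam := by linear_combination h3
        rw [this]; field_simp
    · refine LinearMap.ext fun u => ?_
      show (-(lam⁻¹)) • g ((-(lam⁻¹)) • g u) = (-(lam⁻¹)) • g u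
      rw [hg_smul, E2]
      funext i
      simp only [Pi.smul_apply, smul_eq_mul, Pi.neg_apply, neg_mul]
      field_simp
    · intro a u
      refine TrivSqZeroExt.ext ?_ ?_
      · rw [hPf]
        simp only [fst_add, fst_inl, fst_inr, snd_add, snd_inl, snd_inr, zero_add, add_zero,
          E4, fst_sub, snd_sub, sub_zero]
        field_simp
      · rw [hPs]
        simp only [snd_add, snd_inl, snd_inr, zero_add, hw0, smul_zero, snd_sub, zero_sub,
          LinearMap.smul_apply, LinearMap.comp_apply, sndHom_apply, inrHom_apply]
        funext i
        simp only [Pi.smul_apply, Pi.neg_apply, smul_eq_mul, Pi.add_apply, Pi.zero_apply]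
        field_simp
        rfl
  · rintro ⟨α, Q, hα, hQ, hform⟩ x y
    have hQQ : ∀ v, Q (Q v) = Q v := fun v => by
      have := LinearMap.ext_iff.mp hQ v
      simpa using this
    have hαα : α * α = -α := by rcases hα with h | h <;> rw [h] <;> ring
    have hPz : ∀ z : TrivSqZeroExt K (Fin n → K),
        P z = inl (lam * α * z.fst) - inr (lam • Q z.snd) := by
      intro z
      conv_lhs => rw [← inl_fst_add_inr_snd_eq z]
      exact hform z.fst z.snd
    simp only [hPz]
    refine TrivSqZeroExt.ext ?_ ?_
    · simp only [fst_mul, snd_mul, fst_add, snd_add, fst_sub, snd_sub, fst_smul, snd_smul,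
        fst_inl, snd_inl, fst_inr, snd_inr, op_smul_eq_smul, smul_eq_mul, map_add, map_smul,
        sub_zero, zero_sub, mul_zero, zero_mul, add_zero, zero_add]
      linear_combination (-(lam ^ 2 * x.fst * y.fst)) * hαα
    · simp only [fst_mul, snd_mul, fst_add, snd_add, fst_sub, snd_sub, fst_smul, snd_smul,
        fst_inl, snd_inl, fst_inr, snd_inr, op_smul_eq_smul, smul_eq_mul, map_add, map_smul,
        map_sub, map_neg, hQQ]
      funext i
      simp only [Pi.add_apply, Pi.smul_apply, Pi.sub_apply, Pi.neg_apply, Pi.zero_apply,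
        smul_eq_mul, hQQ, map_zero]
      ring
end

section
/- Let P : R → R be a Rota–Baxter operator of weight zero on the truncated polynomial algebra R = K ⊕ V, and write P(1) = α + v₀ with α ∈ K and v₀ ∈ V. Then α = 0 and P(v₀) = 0. -/
open TrivSqZeroExt

/-- if `P` is a Rota–Baxter operator of weight zero on the truncated
polynomial algebra `R = K ⊕ V` and `P 1 = α + v₀` with `α ∈ K`, `v₀ ∈ V`, then
`α = 0` and `P v₀ = 0`. -/
theorem weight_zero_P_one_components {K : Type*} [Field K] [CharZero K] {n : ℕ} (hn : 1 ≤ n)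
    (P : TrivSqZeroExt K (Fin n → K) →ₗ[K] TrivSqZeroExt K (Fin n → K))
    (hP : ∀ x y, P x * P y = P (x * P y + P x * y))
    (α : K) (v₀ : Fin n → K) (h1 : P 1 = inl α + inr v₀) :
    α = 0 ∧ P (inr v₀) = 0 := by
  set c : K := (P (inr v₀)).fst with hc
  set w : Fin n → K := (P (inr v₀)).snd with hw
  have hdec : P (inr v₀) = inl c + inr w := (inl_fst_add_inr_snd_eq _).symm
  have hsmul : (inl α : TrivSqZeroExt K (Fin n → K)) = α • 1 := by ext <;> simp
  have hPinl : P (inl α) = α • (inl α + inr v₀) := by rw [← h1, hsmul, map_smul]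
  have hA := hP 1 1
  rw [h1, one_mul, mul_one, map_add, map_add, hPinl, hdec] at hA
  have hfst := congrArg fst hA
  have hsnd := congrArg snd hA
  simp [mul_add, add_mul] at hfst hsnd
  -- second equation
  have hB := hP (inr v₀) (inr v₀)
  rw [hdec] at hB
  have harg : (inr v₀ : TrivSqZeroExt K (Fin n → K)) * (inl c + inr w)
      + (inl c + inr w) * inr v₀ = (2 * c) • inr v₀ := by
    ext <;> simp [mul_add, add_mul, two_mul, add_smul, mul_smul]
  rw [harg, map_smul, hdec] at hB
  have hBf := congrArg fst hB
  simp [mul_smul] at hBf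
  have hc0 : c = 0 := by
    have h2 : c * c = 0 := by linear_combination -hBf
    exact mul_self_eq_zero.mp h2
  have hα : α = 0 := by
    have : α * α = 0 := by rw [hc0] at hfst; linear_combination -hfst
    exact mul_self_eq_zero.mp this
  have hw0 : w = 0 := by
    have h2 : (2 : K) • w = 0 := by
      rw [two_smul]
      have := hsnd
      abel_nf at this ⊢
      linear_combination (norm := abel_nf) -this
    have := smul_eq_zero.mp h2
    simpa using this
  refine ⟨hα, ?_⟩
  rw [hdec, hc0, hw0]
  simp
end
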